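/- Let W be a real m×n matrix with 1 < n ≤ m, with rows w_1,…,w_m. The map x ↦ ReLU(Wx) from ℝ^n to ℝ^m is injective if and only if W has a directed spanning set (DSS) of ℝ^n with respect to every x ∈ ℝ^n, i.e. for every x ∈ ℝ^n the set of rows {w_j : ⟨w_j, x⟩ ≥ 0} spans ℝ^n. -/

import Mathlib

/-- Componentwise ReLU applied to a vector. -/
noncomputable def relu {m : ℕ} (y : Fin m → ℝ) : Fin m → ℝ := fun j => max (y j) 0

/-- `W` has a directed spanning set (DSS) of `ℝ^n` with respect to `x` if the rows of `W`
having nonnegative inner product with `x` span `ℝ^n`. -/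
def HasDSS {m n : ℕ} (W : Matrix (Fin m) (Fin n) ℝ) (x : Fin n → ℝ) : Prop :=
  Submodule.span ℝ {w : Fin n → ℝ | ∃ j : Fin m, 0 ≤ dotProduct (W j) x ∧ W j = w} = ⊤

/-- The linear functional `w ↦ w ⬝ᵥ z`. -/
noncomputable def dotLin {n : ℕ} (z : Fin n → ℝ) : (Fin n → ℝ) →ₗ[ℝ] ℝ where
  toFun w := dotProduct w z
  map_add' a b := add_dotProduct a b z
  map_smul' c a := smul_dotProduct c a z

/-- Arithmetic fact for the backward direction. -/
lemma eq_of_relu_eq {a b : ℝ} (h : max a 0 = max b 0) (hs : 0 ≤ a + b) : a = b := by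
  rcases le_or_gt 0 a with ha | ha
  · rcases le_or_gt 0 b with hb | hb
    · rwa [max_eq_left ha, max_eq_left hb] at h
    · rw [max_eq_left ha, max_eq_right hb.le] at h
      linarith
  · rw [max_eq_right ha.le] at h
    have hb : b ≤ 0 := by
      by_contra hb
      push_neg at hb
      rw [max_eq_left hb.le] at h
      linarith
    linarith

/-- **Conditions for injectivity of `ReLU (W x)`**: for `1 < n ≤ m`, the map
`x ↦ ReLU (W x)` is injective iff `W` has a DSS with respect to every `x ∈ ℝ^n`. -/
theorem relu_layer_injective_iff_dss {m n : ℕ} (hn : 1 < n) (hnm : n ≤ m)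
    (W : Matrix (Fin m) (Fin n) ℝ) :
    Function.Injective (fun x : Fin n → ℝ => relu (W.mulVec x)) ↔
      ∀ x : Fin n → ℝ, HasDSS W x := by
  constructor
  · -- injective → DSS everywhere
    intro hinj x
    by_contra hK
    unfold HasDSS at hK
    set S : Set (Fin n → ℝ) :=
      {w : Fin n → ℝ | ∃ j : Fin m, 0 ≤ dotProduct (W j) x ∧ W j = w} with hS
    have hlt : Submodule.span ℝ S < ⊤ := lt_top_iff_ne_top.mpr hK
    obtain ⟨φ, hφne, hφbot⟩ :=
      Submodule.exists_dual_map_eq_bot_of_lt_top hlt inferInstance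
    -- the vector representing φ
    set v : Fin n → ℝ := fun i => φ (Pi.single i 1) with hv
    have hφeq : ∀ w : Fin n → ℝ, φ w = dotProduct w v := by
      intro w
      rw [φ.pi_apply_eq_sum_univ w]
      simp only [dotProduct, hv]
      congr 1
      ext i
      rw [smul_eq_mul]
      congr 2
      ext j
      simp [Pi.single_apply, eq_comm]
    have hvne : v ≠ 0 := by
      intro h0
      apply hφne
      apply LinearMap.ext
      intro w
      rw [hφeq w, h0]
      simp
    have hφS : ∀ w ∈ S, dotProduct w v = 0 := by
      intro w hw
      rw [← hφeq w]
      have : φ w ∈ Submodule.map φ (Submodule.span ℝ S) :=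
        Submodule.mem_map_of_mem (Submodule.subset_span hw)
      rw [hφbot] at this
      simpa using this
    -- choose ε
    have hm : 0 < m := lt_of_lt_of_le (Nat.lt_of_lt_of_le Nat.zero_lt_one hn.le) hnm
    haveI : Nonempty (Fin m) := ⟨⟨0, hm⟩⟩
    set g : Fin m → ℝ := fun j =>
      if dotProduct (W j) x < 0 then
        (-(dotProduct (W j) x)) / (|dotProduct (W j) v| + 1)
      else 1 with hg
    have hgpos : ∀ j, 0 < g j := by
      intro j
      rw [hg]
      dsimp only
      split_ifs with h
      · apply div_pos (by linarith) (by positivity)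
      · norm_num
    set ε : ℝ := Finset.univ.inf' Finset.univ_nonempty g with hε
    have hεpos : 0 < ε := by
      rw [hε, Finset.lt_inf'_iff]
      intro j _
      exact hgpos j
    have hεle : ∀ j, ε ≤ g j := fun j => Finset.inf'_le g (Finset.mem_univ j)
    -- the two points with equal image
    have key : ∀ j : Fin m,
        max (dotProduct (W j) (x + ε • v)) 0
          = max (dotProduct (W j) (x - ε • v)) 0 := by
      intro j
      rcases lt_or_ge (dotProduct (W j) x) 0 with hneg | hpos
      · -- both arguments are negative
        have hb : ε * |dotProduct (W j) v| < -(dotProduct (W j) x) := by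
          have h1 : ε ≤ (-(dotProduct (W j) x)) / (|dotProduct (W j) v| + 1) := by
            have h1 := hεle j
            simp only [hg] at h1
            rwa [if_pos hneg] at h1
          have h2 : ε * (|dotProduct (W j) v| + 1) ≤ -(dotProduct (W j) x) := by
            rw [← le_div_iff₀ (by positivity)]
            exact h1
          nlinarith [abs_nonneg (dotProduct (W j) v), hεpos]
        have habs : |ε * dotProduct (W j) v| < -(dotProduct (W j) x) := by
          rwa [abs_mul, abs_of_pos hεpos]
        have h3 : dotProduct (W j) (x + ε • v) < 0 := by
          rw [dotProduct_add, dotProduct_smul, smul_eq_mul]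
          have := neg_abs_le (ε * dotProduct (W j) v)
          have := abs_le.mp habs.le
          linarith [habs, le_abs_self (ε * dotProduct (W j) v)]
        have h4 : dotProduct (W j) (x - ε • v) < 0 := by
          rw [dotProduct_sub, dotProduct_smul, smul_eq_mul]
          linarith [neg_abs_le (ε * dotProduct (W j) v),
            le_abs_self (ε * dotProduct (W j) v), habs]
        rw [max_eq_right h3.le, max_eq_right h4.le]
      · -- W j ∈ S so W j ⬝ᵥ v = 0
        have hWjS : (W j) ∈ S := ⟨j, hpos, rfl⟩
        have h0 : dotProduct (W j) v = 0 := hφS _ hWjS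
        rw [dotProduct_add, dotProduct_sub, dotProduct_smul,
          smul_eq_mul, h0]
        ring_nf
    have heq : (fun x : Fin n → ℝ => relu (W.mulVec x)) (x + ε • v)
        = (fun x : Fin n → ℝ => relu (W.mulVec x)) (x - ε • v) := by
      funext j
      simp only [relu, Matrix.mulVec]
      exact key j
    have := hinj heq
    apply hvne
    have h2 : (2 * ε) • v = 0 := by
      have : x + ε • v - (x - ε • v) = 0 := by rw [this]; abel
      have h' : (2 * ε) • v = x + ε • v - (x - ε • v) := by
        rw [two_mul, add_smul]; abel
      rw [h', this]
    have := smul_eq_zero.mp h2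
    rcases this with h | h
    · exfalso; nlinarith
    · exact h
  · -- DSS everywhere → injective
    intro hdss x y hxy
    simp only at hxy
    have hxy' : ∀ j : Fin m,
        max (dotProduct (W j) x) 0 = max (dotProduct (W j) y) 0 := by
      intro j
      have := congrFun hxy j
      simpa [relu, Matrix.mulVec] using this
    set z : Fin n → ℝ := x - y with hz
    have hspan := hdss (x + y)
    unfold HasDSS at hspan
    have hker : Submodule.span ℝ
        {w : Fin n → ℝ | ∃ j : Fin m, 0 ≤ dotProduct (W j) (x + y) ∧ W j = w}
        ≤ LinearMap.ker (dotLin z) := by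
      rw [Submodule.span_le]
      rintro w ⟨j, hj, rfl⟩
      have hab : dotProduct (W j) x = dotProduct (W j) y := by
        apply eq_of_relu_eq (hxy' j)
        rwa [← dotProduct_add]
      simp only [SetLike.mem_coe, LinearMap.mem_ker, dotLin, LinearMap.coe_mk, AddHom.coe_mk,
        hz, dotProduct_sub]
      rw [hab]
      ring
    rw [hspan, top_le_iff] at hker
    have hzz : dotProduct z z = 0 := by
      have : z ∈ LinearMap.ker (dotLin z) := by rw [hker]; trivial
      simpa [dotLin] using this
    have : z = 0 := (dotProduct_self_eq_zero).mp hzz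
    rw [hz, sub_eq_zero] at this
    exact this
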